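/- Fix a real m > 0 and M > 0, and let N be a real with N ≥ M^{m+2}(m+1)^{(m+2)/m}. Set Δx = N^{−1/(m+2)}. Let u_0, w_0 : ℝ → [0,1] be nondecreasing M-Lipschitz functions with u_0(x) ≤ w_0(x) for all x. Define G^0_k = u_0(kΔx) and H^0_k = w_0(kΔx) for k ∈ ℤ, and define G^n, H^n inductively by F^{n+1}_k = F^n_k + (1/2)[(F^n_{k+1} − F^n_k)^{m+1} − (F^n_k − F^n_{k−1})^{m+1}]. Then G^n_k ≤ H^n_k for all n ∈ ℕ and k ∈ ℤ. -/

import Mathlib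

open Real

/-- Lipschitz bound for `t ^ (m+1)` on `[0, δ]`. -/
private lemma key_lip (m δ : ℝ) (hm : 0 < m) {x y : ℝ}
    (hy : 0 ≤ y) (hxy : y ≤ x) (hx : x ≤ δ) :
    x ^ (m + 1) - y ^ (m + 1) ≤ (m + 1) * δ ^ m * (x - y) := by
  have hp : (1:ℝ) ≤ m + 1 := by linarith
  have hx0 : 0 ≤ x := hy.trans hxy
  have hδ0 : 0 ≤ δ := hx0.trans hx
  have hderiv : ∀ t ∈ Set.Icc (0:ℝ) δ,
      HasDerivWithinAt (fun t : ℝ => t ^ (m + 1)) ((m + 1) * t ^ m) (Set.Icc (0:ℝ) δ) t := by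
    intro t _
    have h := Real.hasDerivAt_rpow_const (x := t) (p := m + 1) (Or.inr hp)
    simpa using h.hasDerivWithinAt
  have hbound : ∀ t ∈ Set.Icc (0:ℝ) δ, ‖(m + 1) * t ^ m‖ ≤ (m + 1) * δ ^ m := by
    intro t ht
    rw [Real.norm_eq_abs, abs_of_nonneg (mul_nonneg (by linarith) (Real.rpow_nonneg ht.1 m))]
    have := Real.rpow_le_rpow ht.1 ht.2 hm.le
    nlinarith [Real.rpow_nonneg ht.1 m]
  have h := Convex.norm_image_sub_le_of_norm_hasDerivWithin_le hderiv hbound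
    (convex_Icc 0 δ) (Set.mem_Icc.2 ⟨hy, hxy.trans hx⟩) (Set.mem_Icc.2 ⟨hx0, hx⟩)
  have habs : |x ^ (m + 1) - y ^ (m + 1)| ≤ (m + 1) * δ ^ m * |x - y| := by
    simpa [Real.norm_eq_abs] using h
  calc x ^ (m + 1) - y ^ (m + 1) ≤ |x ^ (m + 1) - y ^ (m + 1)| := le_abs_self _
    _ ≤ (m + 1) * δ ^ m * |x - y| := habs
    _ = (m + 1) * δ ^ m * (x - y) := by rw [abs_of_nonneg (by linarith)]

/-- one step of the scheme preserves increments in `[0, δ]`. -/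
private lemma step_inc (m δ : ℝ) (hm : 0 < m) (hδ0 : 0 ≤ δ)
    (hL : (m + 1) * δ ^ m ≤ 1)
    (F F' : ℤ → ℝ)
    (hrec : ∀ k : ℤ, F' k = F k + (1 / 2) * ((F (k + 1) - F k) ^ (m + 1) - (F k - F (k - 1)) ^ (m + 1)))
    (hI : ∀ k : ℤ, 0 ≤ F (k + 1) - F k ∧ F (k + 1) - F k ≤ δ) :
    ∀ k : ℤ, 0 ≤ F' (k + 1) - F' k ∧ F' (k + 1) - F' k ≤ δ := by
  intro k
  set L := (m + 1) * δ ^ m with hLdef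
  have hL0 : 0 ≤ L := mul_nonneg (by linarith) (Real.rpow_nonneg hδ0 m)
  set a := F k - F (k - 1) with ha
  set b := F (k + 1) - F k with hb
  set c := F (k + 2) - F (k + 1) with hc
  have hA := hI (k - 1); have hB := hI k; have hC := hI (k + 1)
  rw [sub_add_cancel] at hA
  have ha1 : 0 ≤ a := hA.1
  have ha2 : a ≤ δ := hA.2
  have hb1 : 0 ≤ b := hB.1
  have hb2 : b ≤ δ := hB.2
  have hc1 : 0 ≤ c := by rw [hc]; have := hC.1; rwa [show k + 1 + 1 = k + 2 by ring] at this
  have hc2 : c ≤ δ := by rw [hc]; have := hC.2; rwa [show k + 1 + 1 = k + 2 by ring] at this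
  have heq : F' (k + 1) - F' k = b + (1/2) * (c ^ (m+1) + a ^ (m+1) - 2 * b ^ (m+1)) := by
    rw [hrec (k+1), hrec k]
    rw [show k + 1 + 1 = k + 2 by ring, show k + 1 - 1 = k by ring]
    rw [ha, hb, hc]
    ring_nf
  -- bounds on rpow values
  have hbp : b ^ (m+1) ≤ L * b := by
    have h := key_lip m δ hm (le_refl (0:ℝ)) hb1 hb2
    rw [Real.zero_rpow (by positivity : m + 1 ≠ 0)] at h
    simpa using h
  have hap0 : 0 ≤ a ^ (m+1) := Real.rpow_nonneg ha1 _
  have hcp0 : 0 ≤ c ^ (m+1) := Real.rpow_nonneg hc1 _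
  have hcb : c ^ (m+1) - b ^ (m+1) ≤ L * (δ - b) := by
    have h1 : c ^ (m+1) ≤ δ ^ (m+1) := Real.rpow_le_rpow hc1 hc2 (by linarith)
    have h2 : δ ^ (m+1) - b ^ (m+1) ≤ L * (δ - b) := key_lip m δ hm hb1 hb2 le_rfl
    linarith
  have hab : a ^ (m+1) - b ^ (m+1) ≤ L * (δ - b) := by
    have h1 : a ^ (m+1) ≤ δ ^ (m+1) := Real.rpow_le_rpow ha1 ha2 (by linarith)
    have h2 : δ ^ (m+1) - b ^ (m+1) ≤ L * (δ - b) := key_lip m δ hm hb1 hb2 le_rfl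
    linarith
  constructor
  · rw [heq]; nlinarith
  · rw [heq]; nlinarith [mul_le_mul_of_nonneg_right hL (sub_nonneg.2 hb2), mul_nonneg hL0 (sub_nonneg.2 hb2)]

/-- one step preserves comparison. -/
private lemma step_cmp (m δ : ℝ) (hm : 0 < m) (hδ0 : 0 ≤ δ)
    (hL : (m + 1) * δ ^ m ≤ 1)
    (F F' E E' : ℤ → ℝ)
    (hrecF : ∀ k : ℤ, F' k = F k + (1 / 2) * ((F (k + 1) - F k) ^ (m + 1) - (F k - F (k - 1)) ^ (m + 1)))
    (hrecE : ∀ k : ℤ, E' k = E k + (1 / 2) * ((E (k + 1) - E k) ^ (m + 1) - (E k - E (k - 1)) ^ (m + 1)))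
    (hIF : ∀ k : ℤ, 0 ≤ F (k + 1) - F k ∧ F (k + 1) - F k ≤ δ)
    (hIE : ∀ k : ℤ, 0 ≤ E (k + 1) - E k ∧ E (k + 1) - E k ≤ δ)
    (hcmp : ∀ k : ℤ, F k ≤ E k) :
    ∀ k : ℤ, F' k ≤ E' k := by
  intro k
  set L := (m + 1) * δ ^ m with hLdef
  have hL0 : 0 ≤ L := mul_nonneg (by linarith) (Real.rpow_nonneg hδ0 m)
  set u := F (k + 1) - F k with hu
  set v := E (k + 1) - E k with hv
  set u' := F k - F (k - 1) with hu'
  set v' := E k - E (k - 1) with hv'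
  set D := E k - F k with hD
  have hD0 : 0 ≤ D := sub_nonneg.2 (hcmp k)
  have hu1 : 0 ≤ u := (hIF k).1
  have hu2 : u ≤ δ := (hIF k).2
  have hv1 : 0 ≤ v := (hIE k).1
  have hv2 : v ≤ δ := (hIE k).2
  have hu'1 : 0 ≤ u' := by have := (hIF (k-1)); rw [sub_add_cancel] at this; exact this.1
  have hu'2 : u' ≤ δ := by have := (hIF (k-1)); rw [sub_add_cancel] at this; exact this.2
  have hv'1 : 0 ≤ v' := by have := (hIE (k-1)); rw [sub_add_cancel] at this; exact this.1
  have hv'2 : v' ≤ δ := by have := (hIE (k-1)); rw [sub_add_cancel] at this; exact this.2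
  -- v^p - u^p ≥ -L * D
  have h1 : -(L * D) ≤ v ^ (m+1) - u ^ (m+1) := by
    rcases le_or_gt u v with h | h
    · have : u ^ (m+1) ≤ v ^ (m+1) := Real.rpow_le_rpow hu1 h (by linarith)
      nlinarith
    · have hkey := key_lip m δ hm hv1 h.le hu2
      have huv : u - v ≤ D := by
        have := hcmp (k + 1); simp only [hu, hv, hD]; linarith
      nlinarith
  -- v'^p - u'^p ≤ L * D
  have h2 : v' ^ (m+1) - u' ^ (m+1) ≤ L * D := by
    rcases le_or_gt v' u' with h | h
    · have : v' ^ (m+1) ≤ u' ^ (m+1) := Real.rpow_le_rpow hv'1 h (by linarith)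
      nlinarith
    · have hkey := key_lip m δ hm hu'1 h.le hv'2
      have huv : v' - u' ≤ D := by
        have := hcmp (k - 1); simp only [hu', hv', hD]; linarith
      nlinarith
  have heF : F' k = F k + (1/2) * (u ^ (m+1) - u' ^ (m+1)) := hrecF k
  have heE : E' k = E k + (1/2) * (v ^ (m+1) - v' ^ (m+1)) := hrecE k
  rw [heF, heE]
  nlinarith
theorem statement6 (m M N : ℝ) (hm : 0 < m) (hM : 0 < M)
    (hN : M ^ (m + 2) * (m + 1) ^ ((m + 2) / m) ≤ N)
    (u0 w0 : ℝ → ℝ)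
    (hu0range : ∀ x : ℝ, 0 ≤ u0 x ∧ u0 x ≤ 1)
    (hw0range : ∀ x : ℝ, 0 ≤ w0 x ∧ w0 x ≤ 1)
    (hu0mono : Monotone u0) (hw0mono : Monotone w0)
    (hu0lip : ∀ x y : ℝ, |u0 x - u0 y| ≤ M * |x - y|)
    (hw0lip : ∀ x y : ℝ, |w0 x - w0 y| ≤ M * |x - y|)
    (hle : ∀ x : ℝ, u0 x ≤ w0 x)
    (G H : ℕ → ℤ → ℝ)
    (hG0 : ∀ k : ℤ, G 0 k = u0 ((k : ℝ) * N ^ (-(1 / (m + 2)) : ℝ)))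
    (hH0 : ∀ k : ℤ, H 0 k = w0 ((k : ℝ) * N ^ (-(1 / (m + 2)) : ℝ)))
    (hGrec : ∀ (n : ℕ) (k : ℤ),
      G (n + 1) k = G n k + (1 / 2) * ((G n (k + 1) - G n k) ^ (m + 1) - (G n k - G n (k - 1)) ^ (m + 1)))
    (hHrec : ∀ (n : ℕ) (k : ℤ),
      H (n + 1) k = H n k + (1 / 2) * ((H n (k + 1) - H n k) ^ (m + 1) - (H n k - H n (k - 1)) ^ (m + 1))) :
    ∀ (n : ℕ) (k : ℤ), G n k ≤ H n k := by
  -- numerics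
  have hm2 : (0:ℝ) < m + 2 := by linarith
  have hN00 : 0 < M ^ (m + 2) * (m + 1) ^ ((m + 2) / m) := by positivity
  have hN0 : 0 < N := lt_of_lt_of_le hN00 hN
  set Δx : ℝ := N ^ (-(1 / (m + 2)) : ℝ) with hΔxdef
  have hΔx : 0 < Δx := Real.rpow_pos_of_pos hN0 _
  set δ : ℝ := M * Δx with hδdef
  have hδ0 : 0 ≤ δ := by positivity
  have hL : (m + 1) * δ ^ m ≤ 1 := by
    set q : ℝ := m / (m + 2) with hq
    have hq0 : 0 ≤ q := by positivity
    have hNq : (m + 1) * M ^ m ≤ N ^ q := by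
      have h1 : (M ^ (m + 2) * (m + 1) ^ ((m + 2) / m)) ^ q ≤ N ^ q :=
        Real.rpow_le_rpow hN00.le hN hq0
      have h2 : (M ^ (m + 2) * (m + 1) ^ ((m + 2) / m)) ^ q
          = M ^ m * (m + 1) := by
        rw [Real.mul_rpow (by positivity) (by positivity),
          ← Real.rpow_mul hM.le, ← Real.rpow_mul (by linarith : (0:ℝ) ≤ m + 1)]
        rw [show (m + 2) * q = m by rw [hq]; field_simp,
          show (m + 2) / m * q = 1 by rw [hq]; field_simp,
          Real.rpow_one]
      linarith
    have hNqpos : 0 < N ^ q := Real.rpow_pos_of_pos hN0 q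
    have hexp : δ ^ m = M ^ m * (N ^ q)⁻¹ := by
      rw [hδdef, Real.mul_rpow hM.le (Real.rpow_nonneg hN0.le _),
        ← Real.rpow_mul hN0.le,
        show -(1 / (m + 2)) * m = -q by rw [hq]; ring,
        Real.rpow_neg hN0.le]
    rw [hexp]
    calc (m + 1) * (M ^ m * (N ^ q)⁻¹) = ((m + 1) * M ^ m) / N ^ q := by ring
      _ ≤ 1 := (div_le_one hNqpos).2 hNq
  -- base case increments
  have hbase : ∀ (v0 : ℝ → ℝ) (F : ℤ → ℝ), (∀ k : ℤ, F k = v0 ((k : ℝ) * Δx)) →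
      Monotone v0 → (∀ x y : ℝ, |v0 x - v0 y| ≤ M * |x - y|) →
      ∀ k : ℤ, 0 ≤ F (k + 1) - F k ∧ F (k + 1) - F k ≤ δ := by
    intro v0 F hF hmono hlip k
    rw [hF (k + 1), hF k]
    have hcast : ((k + 1 : ℤ) : ℝ) = (k : ℝ) + 1 := by push_cast; ring
    rw [hcast]
    have hxy : (k : ℝ) * Δx ≤ ((k : ℝ) + 1) * Δx := by nlinarith
    constructor
    · exact sub_nonneg.2 (hmono hxy)
    · have h := hlip (((k : ℝ) + 1) * Δx) ((k : ℝ) * Δx)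
      rw [show ((k : ℝ) + 1) * Δx - (k : ℝ) * Δx = Δx by ring,
        abs_of_nonneg hΔx.le] at h
      calc v0 (((k : ℝ) + 1) * Δx) - v0 ((k : ℝ) * Δx)
          ≤ |v0 (((k : ℝ) + 1) * Δx) - v0 ((k : ℝ) * Δx)| := le_abs_self _
        _ ≤ M * Δx := h
        _ = δ := rfl
  -- main induction
  have main : ∀ n : ℕ,
      (∀ k : ℤ, 0 ≤ G n (k + 1) - G n k ∧ G n (k + 1) - G n k ≤ δ) ∧
      (∀ k : ℤ, 0 ≤ H n (k + 1) - H n k ∧ H n (k + 1) - H n k ≤ δ) ∧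
      (∀ k : ℤ, G n k ≤ H n k) := by
    intro n
    induction n with
    | zero =>
      refine ⟨hbase u0 (G 0) hG0 hu0mono hu0lip, hbase w0 (H 0) hH0 hw0mono hw0lip, ?_⟩
      intro k; rw [hG0 k, hH0 k]; exact hle _
    | succ n ih =>
      exact ⟨step_inc m δ hm hδ0 hL (G n) (G (n + 1)) (hGrec n) ih.1,
        step_inc m δ hm hδ0 hL (H n) (H (n + 1)) (hHrec n) ih.2.1,
        step_cmp m δ hm hδ0 hL (G n) (G (n + 1)) (H n) (H (n + 1))
          (hGrec n) (hHrec n) ih.1 ih.2.1 ih.2.2⟩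
  exact fun n k => (main n).2.2 k
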